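/- Let F = FreeGroup ℕ and, for k : ℕ, let F_k denote the subgroup Subgroup.closure (FreeGroup.of '' {i : ℕ | i < k}) of F. Fix n j : ℕ, a set X ⊆ (Fin j → F) of j-tuples, and an operation m : (Fin j → F) → (Fin j → F) → (Fin j → F). Assume: (i) for every group automorphism f : F ≃* F that fixes F_n pointwise and every v ∈ X, the tuple f ∘ v lies in X; (ii) m maps X × X into X, is associative and commutative on X, has an identity element e ∈ X for elements of X, and every v ∈ X has some w ∈ X with m v w = e (so (X, m) is an abelian group); (iii) for every automorphism f of F fixing F_n pointwise and all v, w ∈ X, f ∘ (m v w) = m (f ∘ v) (f ∘ w). Then every tuple v ∈ X all of whose coordinates lie in F_{n+1} has all of its coordinates in F_n. -/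

import Mathlib

namespace NCA

open FreeGroup

abbrev FG := FreeGroup ℕ

def C (S : Set ℕ) : Subgroup FG := Subgroup.closure (FreeGroup.of '' S)

lemma C_mono {S T : Set ℕ} (h : S ⊆ T) : C S ≤ C T :=
  Subgroup.closure_mono (Set.image_mono h)

lemma homs_agree {f g : FG →* FG} {S : Set ℕ} (h : ∀ s ∈ S, f (of s) = g (of s)) :
    ∀ x ∈ C S, f x = g x := by
  intro x hx
  induction hx using Subgroup.closure_induction with
  | mem y hy => obtain ⟨s, hs, rfl⟩ := hy; exact h s hs
  | one => simp
  | mul y z _ _ hy hz => simp [map_mul, hy, hz]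
  | inv y _ hy => simp [map_inv, hy]

lemma maps_into {f : FG →* FG} {S T : Set ℕ} (h : ∀ s ∈ S, f (of s) ∈ C T) :
    ∀ x ∈ C S, f x ∈ C T := by
  intro x hx
  induction hx using Subgroup.closure_induction with
  | mem y hy => obtain ⟨s, hs, rfl⟩ := hy; exact h s hs
  | one => simp
  | mul y z _ _ hy hz => rw [_root_.map_mul]; exact mul_mem hy hz
  | inv y _ hy => rw [_root_.map_inv]; exact inv_mem hy

lemma exists_finset (x : FG) : ∃ T : Finset ℕ, x ∈ C ↑T := by
  induction x using FreeGroup.induction_on with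
  | C1 => exact ⟨∅, one_mem _⟩
  | of i => exact ⟨{i}, Subgroup.subset_closure ⟨i, by simp, rfl⟩⟩
  | inv_of i _ => exact ⟨{i}, inv_mem (Subgroup.subset_closure ⟨i, by simp, rfl⟩)⟩
  | mul x y hx hy =>
      obtain ⟨T, hT⟩ := hx; obtain ⟨U, hU⟩ := hy
      exact ⟨T ∪ U, mul_mem (C_mono (by simp) hT) (C_mono (by simp) hU)⟩

lemma mem_C_inter {S T : Set ℕ} {x : FG} (hS : x ∈ C S) (hT : x ∈ C T) : x ∈ C (S ∩ T) := by
  classical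
  let r : FG →* FG := FreeGroup.lift (fun i => if i ∈ T then of i else 1)
  have hfix : r x = x := by
    have := homs_agree (f := r) (g := MonoidHom.id FG) (S := T)
      (by intro s hs; simp [r, lift_apply_of, hs]) x hT
    simpa using this
  have hmem : r x ∈ C (S ∩ T) := by
    refine maps_into (S := S) ?_ x hS
    intro s hs
    by_cases h : s ∈ T
    · simp only [r, lift_apply_of, if_pos h]
      exact Subgroup.subset_closure ⟨s, ⟨hs, h⟩, rfl⟩
    · simp only [r, lift_apply_of, if_neg h]; exact one_mem _
  rwa [hfix] at hmem
lemma peel {T : Finset ℕ} {x : FG} {mm N : ℕ} (hm : mm ∈ T) (hN : N ∉ T) (hmN : mm ≠ N)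
    (hfix : FreeGroup.lift (fun i => if i = mm then of mm * of N else of i) x = x)
    (hx : x ∈ C ↑T) : x ∈ C ↑(T.erase mm) := by
  classical
  let φ : FG →* FG := FreeGroup.lift (fun i => if i = mm then of mm * of N else of i)
  let q : FG →* FG := FreeGroup.lift (fun i => if i = N then (of mm)⁻¹ else of i)
  have hqx : q x = x := by
    have := homs_agree (f := q) (g := MonoidHom.id FG) (S := (↑T : Set ℕ))
      (by intro s hs
          have hsN : s ≠ N := fun h => hN (h ▸ hs)
          simp [q, lift_apply_of, hsN]) x hx
    simpa using this
  have hkey : (q.comp φ) x ∈ C ↑(T.erase mm) := by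
    refine maps_into (S := (↑T : Set ℕ)) ?_ x hx
    intro s hs
    by_cases h : s = mm
    · subst h
      have : (q.comp φ) (of s) = 1 := by
        simp [φ, q, MonoidHom.comp_apply, lift_apply_of, hmN, Ne.symm hmN]
      rw [this]; exact one_mem _
    · have hsN : s ≠ N := fun hh => hN (hh ▸ hs)
      have : (q.comp φ) (of s) = of s := by
        simp [φ, q, MonoidHom.comp_apply, lift_apply_of, h, hsN]
      rw [this]
      exact Subgroup.subset_closure ⟨s, by simp [Finset.mem_erase, h, hs], rfl⟩
  have : (q.comp φ) x = x := by
    have : (q.comp φ) x = q (φ x) := rfl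
    rw [this]
    show q (FreeGroup.lift _ x) = x
    rw [hfix, hqx]
  rwa [this] at hkey

lemma support_in (S : Finset ℕ) (x : FG)
    (hfix : ∀ mm N : ℕ, mm ∉ S → N ∉ S → mm ≠ N →
      FreeGroup.lift (fun i => if i = mm then of mm * of N else of i) x = x) :
    x ∈ C ↑S := by
  classical
  obtain ⟨T, hT⟩ := exists_finset x
  generalize hc : (T \ S).card = k at *
  induction k generalizing T with
  | zero =>
      -- T ⊆ S
      have hsub : T ⊆ S := by
        intro t ht
        by_contra hts
        have : t ∈ T \ S := Finset.mem_sdiff.2 ⟨ht, hts⟩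
        have := Finset.card_pos.2 ⟨t, this⟩
        rw [hc] at this
        omega
      exact C_mono (by exact_mod_cast hsub) hT
  | succ k ih =>
      have hne : (T \ S).Nonempty := by
        rw [← Finset.card_pos, hc]; omega
      obtain ⟨mm, hmm⟩ := hne
      have hmT : mm ∈ T := (Finset.mem_sdiff.1 hmm).1
      have hmS : mm ∉ S := (Finset.mem_sdiff.1 hmm).2
      obtain ⟨N, hNn⟩ := Infinite.exists_notMem_finset (S ∪ T)
      have hNS : N ∉ S := fun h => hNn (Finset.mem_union_left _ h)
      have hNT : N ∉ T := fun h => hNn (Finset.mem_union_right _ h)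
      have hmN : mm ≠ N := fun h => hNT (h ▸ hmT)
      have hx' : x ∈ C ↑(T.erase mm) := peel hmT hNT hmN (hfix mm N hmS hNS hmN) hT
      refine ih (T.erase mm) hx' ?_
      have : T.erase mm \ S = (T \ S).erase mm := by
        ext t; simp [Finset.mem_erase, Finset.mem_sdiff, and_assoc, and_comm, and_left_comm]
      rw [this, Finset.card_erase_of_mem hmm, hc]
      omega
lemma reduce_map (π : ℕ ≃ ℕ) (L : List (ℕ × Bool)) :
    reduce (L.map (fun q => (π q.1, q.2))) = (reduce L).map (fun q => (π q.1, q.2)) := by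
  induction L with
  | nil => rfl
  | cons hd tl ih =>
    rw [List.map_cons, reduce.cons, reduce.cons, ih]
    cases hred : reduce tl with
    | nil => simp
    | cons hd2 tl2 =>
      simp only [List.map_cons]
      by_cases hc : hd.1 = hd2.1 ∧ hd.2 = !hd2.2
      · rw [if_pos hc, if_pos ⟨by rw [hc.1], hc.2⟩]
      · rw [if_neg hc, if_neg (fun hc2 => hc ⟨π.injective hc2.1, hc2.2⟩), List.map_cons,
          List.map_cons]

lemma toWord_map (π : ℕ ≃ ℕ) (x : FG) :
    (freeGroupCongr π x).toWord = x.toWord.map (fun q => (π q.1, q.2)) := by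
  conv_lhs => rw [← mk_toWord (x := x)]
  rw [freeGroupCongr_apply, map.mk, toWord_mk, reduce_map, reduce_toWord]

lemma mk_mem {L : List (ℕ × Bool)} {S : Set ℕ} (h : ∀ q ∈ L, q.1 ∈ S) : mk L ∈ C S := by
  induction L with
  | nil =>
      have : mk ([] : List (ℕ × Bool)) = 1 := rfl
      rw [this]; exact one_mem _
  | cons hd tl ih =>
    have hsplit : mk (hd :: tl) = mk [hd] * mk tl := by rw [mul_mk]; rfl
    rw [hsplit]
    refine mul_mem ?_ (ih fun q hq => h q (List.mem_cons_of_mem _ hq))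
    have h1 : hd.1 ∈ S := h hd List.mem_cons_self
    rcases hd with ⟨l, b⟩
    cases b
    · have : mk [(l, false)] = (of l)⁻¹ := by
        rw [show (of l : FG) = mk [(l, true)] from rfl, inv_mk]
        rfl
      rw [this]
      exact inv_mem (Subgroup.subset_closure ⟨l, h1, rfl⟩)
    · exact Subgroup.subset_closure ⟨l, h1, rfl⟩

lemma fixed_of_congr {π : ℕ ≃ ℕ} {x : FG} (h : freeGroupCongr π x = x) :
    x ∈ C {l | π l = l} := by
  have hw : x.toWord.map (fun q => (π q.1, q.2)) = x.toWord := by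
    rw [← toWord_map π x, h]
  have aux : ∀ (L : List (ℕ × Bool)), L.map (fun q => (π q.1, q.2)) = L →
      ∀ q ∈ L, π q.1 = q.1 := by
    intro L
    induction L with
    | nil => intro _ q hq; simp at hq
    | cons hd tl ih =>
      intro hmap q hq
      rw [List.map_cons] at hmap
      injection hmap with h1 h2
      rcases List.mem_cons.1 hq with rfl | hq2
      · exact congrArg Prod.fst h1
      · exact ih h2 q hq2
  have hx : x = mk x.toWord := (mk_toWord).symm
  rw [hx]
  exact mk_mem (fun q hq => aux _ hw q hq)

def elemAuto (φ ψ : ℕ → FG) (h1 : ∀ i, FreeGroup.lift ψ (φ i) = of i)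
    (h2 : ∀ i, FreeGroup.lift φ (ψ i) = of i) : FG ≃* FG where
  toFun := FreeGroup.lift φ
  invFun := FreeGroup.lift ψ
  left_inv := fun x => by
    have h : (FreeGroup.lift ψ).comp (FreeGroup.lift φ) = MonoidHom.id FG :=
      ext_hom _ _ (fun a => by simp [lift_apply_of, h1])
    simpa using DFunLike.congr_fun h x
  right_inv := fun x => by
    have h : (FreeGroup.lift φ).comp (FreeGroup.lift ψ) = MonoidHom.id FG :=
      ext_hom _ _ (fun a => by simp [lift_apply_of, h2])
    simpa using DFunLike.congr_fun h x
  map_mul' := map_mul _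
lemma elemAuto_apply (φ ψ : ℕ → FG) (h1 h2) (x : FG) :
    elemAuto φ ψ h1 h2 x = FreeGroup.lift φ x := rfl

def mulA (mm N : ℕ) (h : mm ≠ N) : FG ≃* FG :=
  elemAuto (fun i => if i = mm then of mm * of N else of i)
    (fun i => if i = mm then of mm * (of N)⁻¹ else of i)
    (by intro i
        by_cases hi : i = mm
        · subst hi; simp [lift_apply_of, Ne.symm h]
        · simp [lift_apply_of, hi])
    (by intro i
        by_cases hi : i = mm
        · subst hi; simp [lift_apply_of, Ne.symm h]
        · simp [lift_apply_of, hi])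

lemma mulA_apply (mm N : ℕ) (h : mm ≠ N) (x : FG) :
    mulA mm N h x = FreeGroup.lift (fun i => if i = mm then of mm * of N else of i) x := rfl

lemma mulA_of (mm N : ℕ) (h : mm ≠ N) (i : ℕ) :
    mulA mm N h (of i) = if i = mm then of mm * of N else of i := by
  rw [mulA_apply, lift_apply_of]

def leftA (p a : ℕ) (h : p ≠ a) : FG ≃* FG :=
  elemAuto (fun i => if i = a then (of p)⁻¹ * of a else of i)
    (fun i => if i = a then of p * of a else of i)
    (by intro i
        by_cases hi : i = a
        · subst hi; simp [lift_apply_of, h]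
        · simp [lift_apply_of, hi])
    (by intro i
        by_cases hi : i = a
        · subst hi; simp [lift_apply_of, h]
        · simp [lift_apply_of, hi])

lemma leftA_of (p a : ℕ) (h : p ≠ a) (i : ℕ) :
    leftA p a h (of i) = if i = a then (of p)⁻¹ * of a else of i := by
  rw [show leftA p a h (of i) =
    FreeGroup.lift (fun i => if i = a then (of p)⁻¹ * of a else of i) (of i) from rfl, lift_apply_of]

def conjA (p a : ℕ) (h : p ≠ a) : FG ≃* FG :=
  elemAuto (fun i => if i = a then of p * of a * (of p)⁻¹ else of i)
    (fun i => if i = a then (of p)⁻¹ * of a * of p else of i)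
    (by intro i
        by_cases hi : i = a
        · subst hi
          simp [lift_apply_of, h, mul_assoc]
        · simp [lift_apply_of, hi])
    (by intro i
        by_cases hi : i = a
        · subst hi
          simp [lift_apply_of, h, mul_assoc]
        · simp [lift_apply_of, hi])

lemma conjA_of (p a : ℕ) (h : p ≠ a) (i : ℕ) :
    conjA p a h (of i) = if i = a then of p * of a * (of p)⁻¹ else of i := by
  rw [show conjA p a h (of i) =
    FreeGroup.lift (fun i => if i = a then of p * of a * (of p)⁻¹ else of i) (of i) from rfl,
    lift_apply_of]

lemma swap_twice (u w : ℕ) (x : FG) :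
    freeGroupCongr (Equiv.swap u w) (freeGroupCongr (Equiv.swap u w) x) = x := by
  rw [← MulEquiv.trans_apply, freeGroupCongr_trans, Equiv.swap_swap, freeGroupCongr_refl,
    MulEquiv.refl_apply]

lemma congr_of (π : ℕ ≃ ℕ) (i : ℕ) : freeGroupCongr π (of i) = of (π i) := by
  rw [freeGroupCongr_apply, map.of]

end NCA

open FreeGroup

/-- The noncommutativity argument (automorphism-invariance form), Section 2 of the paper:
a subset `X` of `j`-tuples of the free group on countably many generators, invariant under
all automorphisms fixing the subgroup generated by the first `n` generators pointwise, and
carrying an invariant abelian group operation, gains no new tuples when passing from the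
free group on the first `n + 1` generators to the free group on the first `n` generators. -/
theorem noncommutativity_argument (n j : ℕ)
    (X : Set (Fin j → FreeGroup ℕ))
    (m : (Fin j → FreeGroup ℕ) → (Fin j → FreeGroup ℕ) → (Fin j → FreeGroup ℕ))
    (hXinv : ∀ f : FreeGroup ℕ ≃* FreeGroup ℕ,
      (∀ x ∈ Subgroup.closure (FreeGroup.of '' {i : ℕ | i < n}), f x = x) →
      ∀ v ∈ X, (fun i => f (v i)) ∈ X)
    (hclosed : ∀ v ∈ X, ∀ w ∈ X, m v w ∈ X)
    (hassoc : ∀ v ∈ X, ∀ w ∈ X, ∀ u ∈ X, m (m v w) u = m v (m w u))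
    (hcomm : ∀ v ∈ X, ∀ w ∈ X, m v w = m w v)
    (e : Fin j → FreeGroup ℕ) (he : e ∈ X)
    (hid : ∀ v ∈ X, m v e = v ∧ m e v = v)
    (hinv : ∀ v ∈ X, ∃ w ∈ X, m v w = e)
    (hminv : ∀ f : FreeGroup ℕ ≃* FreeGroup ℕ,
      (∀ x ∈ Subgroup.closure (FreeGroup.of '' {i : ℕ | i < n}), f x = x) →
      ∀ v ∈ X, ∀ w ∈ X,
        (fun i => f (m v w i)) = m (fun i => f (v i)) (fun i => f (w i))) :
    ∀ v ∈ X, (∀ i : Fin j, v i ∈ Subgroup.closure (FreeGroup.of '' {i : ℕ | i < n + 1})) →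
      ∀ i : Fin j, v i ∈ Subgroup.closure (FreeGroup.of '' {i : ℕ | i < n}) := by
  classical
  intro v hv hcoords
  -- the commutative group structure on X
  letI : CommGroup ↥X :=
    { mul := fun x y => ⟨m x.1 y.1, hclosed x.1 x.2 y.1 y.2⟩
      one := ⟨e, he⟩
      inv := fun x => ⟨(hinv x.1 x.2).choose, (hinv x.1 x.2).choose_spec.1⟩
      mul_assoc := fun x y z => Subtype.ext (hassoc x.1 x.2 y.1 y.2 z.1 z.2)
      one_mul := fun x => Subtype.ext (hid x.1 x.2).2
      mul_one := fun x => Subtype.ext (hid x.1 x.2).1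
      inv_mul_cancel := fun x => Subtype.ext (by
        have h2 := (hinv x.1 x.2).choose_spec.2
        have h3 := hcomm x.1 x.2 (hinv x.1 x.2).choose (hinv x.1 x.2).choose_spec.1
        show m (hinv x.1 x.2).choose x.1 = e
        rw [← h3, h2])
      mul_comm := fun x y => Subtype.ext (hcomm x.1 x.2 y.1 y.2) }
  -- the action of automorphisms fixing F_n on X, as group endomorphisms
  let act : ∀ (f : FreeGroup ℕ ≃* FreeGroup ℕ),
      (∀ x ∈ Subgroup.closure (FreeGroup.of '' {i : ℕ | i < n}), f x = x) → (↥X →* ↥X) :=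
    fun f hf => MonoidHom.mk' (fun x => ⟨fun i => f (x.1 i), hXinv f hf x.1 x.2⟩)
      (fun x y => Subtype.ext (hminv f hf x.1 x.2 y.1 y.2))
  -- agreement of homomorphisms on the coordinates of v
  have agreeUp : ∀ (f g : FreeGroup ℕ →* FreeGroup ℕ),
      (∀ s, s < n + 1 → f (of s) = g (of s)) → ∀ i : Fin j, f (v i) = g (v i) :=
    fun f g hfg i =>
      NCA.homs_agree (S := {l : ℕ | l < n + 1}) (fun s hs => hfg s hs) (v i) (hcoords i)
  have lowfix : ∀ (f : FreeGroup ℕ ≃* FreeGroup ℕ), (∀ s, s < n → f (of s) = of s) →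
      ∀ x ∈ Subgroup.closure (FreeGroup.of '' {i : ℕ | i < n}), f x = x := by
    intro f hf x hx
    have := NCA.homs_agree (f := (f : FreeGroup ℕ →* FreeGroup ℕ)) (g := MonoidHom.id _)
      (S := {l : ℕ | l < n}) (fun s hs => hf s hs) x hx
    simpa using this
  have hne1 : n ≠ n + 1 := by omega
  have hne2 : n ≠ n + 2 := by omega
  let α := NCA.mulA n (n + 1) hne1
  let β := NCA.mulA n (n + 2) hne2
  let sab := freeGroupCongr (Equiv.swap (n + 1) (n + 2))
  let spa := freeGroupCongr (Equiv.swap n (n + 1))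
  let hA := NCA.leftA n (n + 1) hne1
  let ζA := NCA.conjA n (n + 1) hne1
  have hαlow := lowfix α (fun s hs => by
    simp [α, NCA.mulA_of, show s ≠ n by omega])
  have hβlow := lowfix β (fun s hs => by
    simp [β, NCA.mulA_of, show s ≠ n by omega])
  have hsablow := lowfix sab (fun s hs => by
    simp [sab, NCA.congr_of, Equiv.swap_apply_of_ne_of_ne, show s ≠ n + 1 by omega,
      show s ≠ n + 2 by omega])
  have hspalow := lowfix spa (fun s hs => by
    simp [spa, NCA.congr_of, Equiv.swap_apply_of_ne_of_ne, show s ≠ n by omega,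
      show s ≠ n + 1 by omega])
  have hhAlow := lowfix hA (fun s hs => by
    simp [hA, NCA.leftA_of, show s ≠ n + 1 by omega])
  have hζlow := lowfix ζA (fun s hs => by
    simp [ζA, NCA.conjA_of, show s ≠ n + 1 by omega])
  let Bx : ↥X := ⟨v, hv⟩
  let A1 := act α hαlow Bx
  let A2 := act β hβlow Bx
  let XJ := A1 * A2 * (Bx * Bx)⁻¹
  -- step 1: the coordinates of XJ have support in range (n+3)
  have hXJsup : ∀ i : Fin j, XJ.1 i ∈ NCA.C ↑(Finset.range (n + 3)) := by
    intro i
    apply NCA.support_in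
    intro mm N hm hN hmn
    have hmm3 : ¬ mm < n + 3 := fun h => hm (Finset.mem_range.2 h)
    have hNN3 : ¬ N < n + 3 := fun h => hN (Finset.mem_range.2 h)
    let μ := NCA.mulA mm N hmn
    have hμlow := lowfix μ (fun s hs => by simp [μ, NCA.mulA_of, show s ≠ mm by omega])
    have hB : act μ hμlow Bx = Bx := Subtype.ext (funext fun i2 => by
      have := agreeUp (μ : FreeGroup ℕ →* FreeGroup ℕ) (MonoidHom.id _)
        (fun s hs => by simp [μ, NCA.mulA_of, show s ≠ mm by omega]) i2
      exact this)
    have hA1 : act μ hμlow A1 = A1 := Subtype.ext (funext fun i2 => by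
      have := agreeUp ((μ : FreeGroup ℕ →* FreeGroup ℕ).comp (α : FreeGroup ℕ →* FreeGroup ℕ))
        (α : FreeGroup ℕ →* FreeGroup ℕ)
        (fun s hs => by
          by_cases hsn : s = n
          · rw [hsn]
            simp [α, μ, NCA.mulA_of, _root_.map_mul, show n ≠ mm by omega,
              show n + 1 ≠ mm by omega]
          · simp [α, μ, NCA.mulA_of, hsn, show s ≠ mm by omega]) i2
      exact this)
    have hA2 : act μ hμlow A2 = A2 := Subtype.ext (funext fun i2 => by
      have := agreeUp ((μ : FreeGroup ℕ →* FreeGroup ℕ).comp (β : FreeGroup ℕ →* FreeGroup ℕ))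
        (β : FreeGroup ℕ →* FreeGroup ℕ)
        (fun s hs => by
          by_cases hsn : s = n
          · rw [hsn]
            simp [β, μ, NCA.mulA_of, _root_.map_mul, show n ≠ mm by omega,
              show n + 2 ≠ mm by omega]
          · simp [β, μ, NCA.mulA_of, hsn, show s ≠ mm by omega]) i2
      exact this)
    have hfixXJ : act μ hμlow XJ = XJ := by
      show act μ hμlow (A1 * A2 * (Bx * Bx)⁻¹) = A1 * A2 * (Bx * Bx)⁻¹
      rw [_root_.map_mul, _root_.map_mul, _root_.map_inv, _root_.map_mul, hB, hA1, hA2]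
    exact congrFun (congrArg Subtype.val hfixXJ) i
  -- step 2: XJ is invariant under swapping n+1 and n+2, so its coordinates live in F_{n+1}
  have hsab1 : act sab hsablow A1 = A2 := Subtype.ext (funext fun i2 => by
    have := agreeUp ((sab : FreeGroup ℕ →* FreeGroup ℕ).comp (α : FreeGroup ℕ →* FreeGroup ℕ))
      (β : FreeGroup ℕ →* FreeGroup ℕ)
      (fun s hs => by
        by_cases hsn : s = n
        · rw [hsn]
          simp [α, β, sab, NCA.mulA_of, NCA.congr_of, _root_.map_mul,
            Equiv.swap_apply_left, Equiv.swap_apply_of_ne_of_ne,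
            show n ≠ n + 1 by omega, show n ≠ n + 2 by omega]
        · simp [α, β, sab, NCA.mulA_of, NCA.congr_of, hsn, Equiv.swap_apply_of_ne_of_ne,
            show s ≠ n + 1 by omega, show s ≠ n + 2 by omega]) i2
    exact this)
  have hsab2 : act sab hsablow A2 = A1 := Subtype.ext (funext fun i2 => by
    have := agreeUp ((sab : FreeGroup ℕ →* FreeGroup ℕ).comp (β : FreeGroup ℕ →* FreeGroup ℕ))
      (α : FreeGroup ℕ →* FreeGroup ℕ)
      (fun s hs => by
        by_cases hsn : s = n
        · rw [hsn]
          simp [α, β, sab, NCA.mulA_of, NCA.congr_of, _root_.map_mul,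
            Equiv.swap_apply_right, Equiv.swap_apply_of_ne_of_ne,
            show n ≠ n + 1 by omega, show n ≠ n + 2 by omega]
        · simp [α, β, sab, NCA.mulA_of, NCA.congr_of, hsn, Equiv.swap_apply_of_ne_of_ne,
            show s ≠ n + 1 by omega, show s ≠ n + 2 by omega]) i2
    exact this)
  have hsabB : act sab hsablow Bx = Bx := Subtype.ext (funext fun i2 => by
    have := agreeUp (sab : FreeGroup ℕ →* FreeGroup ℕ) (MonoidHom.id _)
      (fun s hs => by simp [sab, NCA.congr_of, Equiv.swap_apply_of_ne_of_ne,
        show s ≠ n + 1 by omega, show s ≠ n + 2 by omega]) i2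
    exact this)
  have hXJswap : act sab hsablow XJ = XJ := by
    show act sab hsablow (A1 * A2 * (Bx * Bx)⁻¹) = A1 * A2 * (Bx * Bx)⁻¹
    rw [_root_.map_mul, _root_.map_mul, _root_.map_inv, _root_.map_mul, hsab1, hsab2, hsabB,
      mul_comm A2 A1]
  have hXJUp : ∀ i : Fin j, XJ.1 i ∈ NCA.C {l : ℕ | l < n + 1} := by
    intro i
    have h2 : freeGroupCongr (Equiv.swap (n + 1) (n + 2)) (XJ.1 i) = XJ.1 i :=
      congrFun (congrArg Subtype.val hXJswap) i
    have h3 := NCA.fixed_of_congr h2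
    have h4 := NCA.mem_C_inter (hXJsup i) h3
    refine NCA.C_mono ?_ h4
    rintro l ⟨hl1, hl2⟩
    have hl1' : l < n + 3 := by simpa using hl1
    have hla : l ≠ n + 1 := by
      rintro rfl
      rw [Set.mem_setOf_eq, Equiv.swap_apply_left] at hl2
      omega
    have hlb : l ≠ n + 2 := by
      rintro rfl
      rw [Set.mem_setOf_eq, Equiv.swap_apply_right] at hl2
      omega
    show l < n + 1
    omega
  -- step 3: XJ is fixed by hA : e_{n+1} ↦ e_n⁻¹ e_{n+1}
  have hXJhA : act hA hhAlow XJ = XJ := Subtype.ext (funext fun i => by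
    have := NCA.homs_agree (f := (hA : FreeGroup ℕ →* FreeGroup ℕ)) (g := MonoidHom.id _)
      (S := {l : ℕ | l < n + 1})
      (fun s hs => by
        have hs' : s < n + 1 := hs
        simp [hA, NCA.leftA_of, show s ≠ n + 1 by omega])
      (XJ.1 i) (hXJUp i)
    exact this)
  have hhAB : act hA hhAlow Bx = Bx := Subtype.ext (funext fun i2 => by
    have := agreeUp (hA : FreeGroup ℕ →* FreeGroup ℕ) (MonoidHom.id _)
      (fun s hs => by simp [hA, NCA.leftA_of, show s ≠ n + 1 by omega]) i2
    exact this)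
  have hhA2 : act hA hhAlow A2 = A2 := Subtype.ext (funext fun i2 => by
    have := agreeUp ((hA : FreeGroup ℕ →* FreeGroup ℕ).comp (β : FreeGroup ℕ →* FreeGroup ℕ))
      (β : FreeGroup ℕ →* FreeGroup ℕ)
      (fun s hs => by
        by_cases hsn : s = n
        · rw [hsn]
          simp [β, hA, NCA.mulA_of, NCA.leftA_of, _root_.map_mul,
            show n ≠ n + 1 by omega, show n + 2 ≠ n + 1 by omega]
        · simp [β, hA, NCA.mulA_of, NCA.leftA_of, hsn, show s ≠ n + 1 by omega]) i2
    exact this)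
  have hhA1 : act hA hhAlow A1 = act spa hspalow Bx := Subtype.ext (funext fun i2 => by
    have := agreeUp ((hA : FreeGroup ℕ →* FreeGroup ℕ).comp (α : FreeGroup ℕ →* FreeGroup ℕ))
      (spa : FreeGroup ℕ →* FreeGroup ℕ)
      (fun s hs => by
        by_cases hsn : s = n
        · rw [hsn]
          simp [α, hA, spa, NCA.mulA_of, NCA.leftA_of, NCA.congr_of, _root_.map_mul,
            Equiv.swap_apply_left, show n ≠ n + 1 by omega]
        · simp [α, hA, spa, NCA.mulA_of, NCA.leftA_of, NCA.congr_of, hsn,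
            Equiv.swap_apply_of_ne_of_ne, show s ≠ n + 1 by omega]) i2
    exact this)
  have hA1spa : A1 = act spa hspalow Bx := by
    have heq : A1 * A2 * (Bx * Bx)⁻¹ = act spa hspalow Bx * A2 * (Bx * Bx)⁻¹ := by
      conv_lhs => rw [show A1 * A2 * (Bx * Bx)⁻¹ = XJ from rfl, ← hXJhA]
      show act hA hhAlow (A1 * A2 * (Bx * Bx)⁻¹) = _
      rw [_root_.map_mul, _root_.map_mul, _root_.map_inv, _root_.map_mul, hhA1, hhA2, hhAB]
    exact mul_right_cancel (mul_right_cancel heq)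
  -- step 4: conclude that α fixes every coordinate of v
  have hcoordEq : ∀ i : Fin j, α (v i) = spa (v i) :=
    fun i => congrFun (congrArg Subtype.val hA1spa) i
  have hfinal : ∀ i : Fin j, α (v i) = v i := by
    intro i
    have h1 : spa (α (v i)) = v i := by
      rw [hcoordEq i]
      exact NCA.swap_twice _ _ _
    have h2 : ζA (spa (α (v i))) = v i := by
      rw [h1]
      have := NCA.homs_agree (f := (ζA : FreeGroup ℕ →* FreeGroup ℕ)) (g := MonoidHom.id _)
        (S := {l : ℕ | l < n + 1})
        (fun s hs => by
          have hs' : s < n + 1 := hs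
          simp [ζA, NCA.conjA_of, show s ≠ n + 1 by omega])
        (v i) (hcoords i)
      simpa using this
    have h3 := agreeUp
      (((ζA : FreeGroup ℕ →* FreeGroup ℕ).comp (spa : FreeGroup ℕ →* FreeGroup ℕ)).comp
        (α : FreeGroup ℕ →* FreeGroup ℕ))
      (α : FreeGroup ℕ →* FreeGroup ℕ)
      (fun s hs => by
        by_cases hsn : s = n
        · rw [hsn]
          simp [α, spa, ζA, NCA.mulA_of, NCA.conjA_of, NCA.congr_of, _root_.map_mul,
            Equiv.swap_apply_left, Equiv.swap_apply_right, show n ≠ n + 1 by omega, mul_assoc]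
        · simp [α, spa, ζA, NCA.mulA_of, NCA.conjA_of, NCA.congr_of, hsn,
            Equiv.swap_apply_of_ne_of_ne, show s ≠ n + 1 by omega]) i
    have h3' : ζA (spa (α (v i))) = α (v i) := by simpa using h3
    rw [← h3', h2]
  -- step 5: a retraction argument removes the letter e_n from the coordinates of v
  intro i
  let q : FreeGroup ℕ →* FreeGroup ℕ :=
    FreeGroup.lift (fun i2 => if i2 = n + 1 then (of n)⁻¹ else of i2)
  let r : FreeGroup ℕ →* FreeGroup ℕ :=
    FreeGroup.lift (fun i2 => if i2 = n then 1 else of i2)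
  have hq : q (v i) = v i := by
    have := NCA.homs_agree (f := q) (g := MonoidHom.id _) (S := {l : ℕ | l < n + 1})
      (fun s hs => by
        have hs' : s < n + 1 := hs
        simp [q, lift_apply_of, show s ≠ n + 1 by omega]) (v i) (hcoords i)
    simpa using this
  have hqα : q (α (v i)) = r (v i) := by
    have := agreeUp (q.comp (α : FreeGroup ℕ →* FreeGroup ℕ)) r
      (fun s hs => by
        by_cases hsn : s = n
        · rw [hsn]
          simp [α, q, r, NCA.mulA_of, lift_apply_of, _root_.map_mul, show n ≠ n + 1 by omega]
        · simp [α, q, r, NCA.mulA_of, lift_apply_of, hsn, show s ≠ n + 1 by omega]) i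
    simpa using this
  have hr : r (v i) ∈ Subgroup.closure (FreeGroup.of '' {l : ℕ | l < n}) := by
    refine NCA.maps_into (S := {l : ℕ | l < n + 1}) ?_ (v i) (hcoords i)
    intro s hs
    by_cases hsn : s = n
    · rw [hsn]
      rw [show r (of n) = 1 from by simp [r, lift_apply_of]]
      exact one_mem _
    · rw [show r (of s) = of s from by simp [r, lift_apply_of, hsn]]
      exact Subgroup.subset_closure ⟨s, by
        constructor
        · show s < n
          have : s < n + 1 := hs
          omega
        · rfl⟩
  have hvr : v i = r (v i) := by
    rw [← hqα, hfinal i, hq]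
  rw [hvr]
  exact hr
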